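/- Let s ≥ 1, n ≥ 1, N ≥ 1, h > 0, ρ > 0, and let β = diag(β_1, …, β_n) be a real diagonal n×n matrix. For i = 1, …, n set B_i = hρβ_i D² and θ_i = [[(I+B_i²)^{−1}, B_i(I+B_i²)^{−1}], [−B_i(I+B_i²)^{−1}, (I+B_i²)^{−1}]] ∈ ℝ^{2(2N+1)×2(2N+1)}, where I is the (2N+1)×(2N+1) identity. Then the matrix I − hρ (I_s ⊗ β ⊗ J₂ ⊗ D²) of size 2sn(2N+1) is invertible, and its inverse equals I_s ⊗ blockdiag(θ_1, …, θ_n), where ⊗ is the Kronecker product and I_s the s×s identity. -/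

import Mathlib

open Real
open scoped Kronecker

lemma blockMul {n' I : Type*} [Fintype n'] [Fintype I] [DecidableEq n']
    (f g : n' → Matrix I I ℝ) :
    ((Matrix.of fun p q : n' × I => if p.1 = q.1 then f p.1 p.2 q.2 else 0) *
      (Matrix.of fun p q : n' × I => if p.1 = q.1 then g p.1 p.2 q.2 else 0)) =
    Matrix.of fun p q : n' × I => if p.1 = q.1 then (f p.1 * g p.1) p.2 q.2 else 0 := by
  ext ⟨k, x⟩ ⟨j, y⟩
  rw [Matrix.mul_apply]
  simp only [Matrix.of_apply, Fintype.sum_prod_type, ite_mul, mul_ite, zero_mul, mul_zero]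
  have h0 : ∀ l : n', ∑ z : I,
      (if l = j then if k = l then f k x z * g l z y else 0 else 0) =
      if l = k then (if k = j then ∑ z : I, f k x z * g k z y else 0) else 0 := by
    intro l
    by_cases h1 : k = l
    · subst h1; by_cases h2 : k = j <;> simp [h2]
    · have h1' : ¬ l = k := fun e => h1 e.symm
      simp [h1, h1']
  rw [Finset.sum_congr rfl fun l _ => h0 l, Finset.sum_ite_eq' Finset.univ k]
  simp [Matrix.mul_apply]


/-- The matrix `I − hρ (I_s ⊗ β ⊗ J₂ ⊗ D²)` is invertible, with inverse
`Θ = I_s ⊗ blockdiag(θ_1, …, θ_n)`, where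
`θ_i = [[(I+B_i²)⁻¹, B_i(I+B_i²)⁻¹], [−B_i(I+B_i²)⁻¹, (I+B_i²)⁻¹]]` and `B_i = hρβ_i D²`
(here `θ_i` is written in equivalent Kronecker form `I₂ ⊗ (I+B_i²)⁻¹ + J₂ ⊗ B_i(I+B_i²)⁻¹`). -/
theorem blended_iteration_weight_matrix
    (s n N : ℕ) (hs : 1 ≤ s) (hn : 1 ≤ n) (hN : 1 ≤ N)
    (a b : ℝ) (hab : a < b)
    (h ρ : ℝ) (hh : 0 < h) (hρ : 0 < ρ)
    (β : Fin n → ℝ) (βM : Matrix (Fin n) (Fin n) ℝ) (hβM : βM = Matrix.diagonal β)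
    (D : Matrix (Fin (2 * N + 1)) (Fin (2 * N + 1)) ℝ)
    (hD : D = Matrix.diagonal (fun j : Fin (2 * N + 1) =>
      2 * π / (b - a) * (⌈((j : ℕ) : ℝ) / 2⌉ : ℤ)))
    (J2 : Matrix (Fin 2) (Fin 2) ℝ) (hJ2 : J2 = !![0, 1; -1, 0])
    (B : Fin n → Matrix (Fin (2 * N + 1)) (Fin (2 * N + 1)) ℝ)
    (hB : ∀ i, B i = (h * ρ * β i) • (D * D))
    (θ : Fin n → Matrix (Fin 2 × Fin (2 * N + 1)) (Fin 2 × Fin (2 * N + 1)) ℝ)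
    (hθ : ∀ i, θ i =
      (1 : Matrix (Fin 2) (Fin 2) ℝ) ⊗ₖ (1 + B i * B i)⁻¹
        + J2 ⊗ₖ (B i * (1 + B i * B i)⁻¹))
    (BD : Matrix (Fin n × (Fin 2 × Fin (2 * N + 1)))
                 (Fin n × (Fin 2 × Fin (2 * N + 1))) ℝ)
    (hBD : ∀ p q, BD p q = if p.1 = q.1 then θ p.1 p.2 q.2 else 0) :
    IsUnit (1 - (h * ρ) •
        ((1 : Matrix (Fin s) (Fin s) ℝ) ⊗ₖ (βM ⊗ₖ (J2 ⊗ₖ (D * D)))))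
    ∧ (1 - (h * ρ) •
        ((1 : Matrix (Fin s) (Fin s) ℝ) ⊗ₖ (βM ⊗ₖ (J2 ⊗ₖ (D * D)))))⁻¹ =
        (1 : Matrix (Fin s) (Fin s) ℝ) ⊗ₖ BD := by
  -- J2 squares to -1
  have hJ : J2 * J2 = -1 := by
    subst hJ2
    ext i j
    fin_cases i <;> fin_cases j <;>
      simp [Matrix.mul_apply, Fin.sum_univ_two, Matrix.one_apply]
  -- each B i is diagonal, 1 + B i ^2 invertible
  have hkey : ∀ i : Fin n,
      ((1 : Matrix (Fin 2 × Fin (2 * N + 1)) (Fin 2 × Fin (2 * N + 1)) ℝ)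
        - J2 ⊗ₖ B i) * θ i = 1 := by
    intro i
    set w : Fin (2 * N + 1) → ℝ := fun j =>
      h * ρ * β i * ((2 * π / (b - a) * (⌈((j : ℕ) : ℝ) / 2⌉ : ℤ)) *
        (2 * π / (b - a) * (⌈((j : ℕ) : ℝ) / 2⌉ : ℤ))) with hw
    have hBd : B i = Matrix.diagonal w := by
      rw [hB i, hD, Matrix.diagonal_mul_diagonal, ← Matrix.diagonal_smul]
      rfl
    have hdet : IsUnit (1 + B i * B i).det := by
      have : (1 : Matrix (Fin (2*N+1)) (Fin (2*N+1)) ℝ) + B i * B i =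
          Matrix.diagonal (fun j => 1 + w j * w j) := by
        rw [hBd, Matrix.diagonal_mul_diagonal, ← Matrix.diagonal_one,
          Matrix.diagonal_add]
      rw [this, Matrix.det_diagonal]
      refine isUnit_iff_ne_zero.mpr (Finset.prod_ne_zero_iff.mpr fun j _ => ?_)
      nlinarith [mul_self_nonneg (w j)]
    have hC : (1 + B i * B i) * (1 + B i * B i)⁻¹ = 1 :=
      Matrix.mul_nonsing_inv _ hdet
    rw [hθ i]
    set C := (1 + B i * B i)⁻¹ with hCdef
    have hneg : ∀ X : Matrix (Fin (2*N+1)) (Fin (2*N+1)) ℝ,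
        ((-1 : Matrix (Fin 2) (Fin 2) ℝ)) ⊗ₖ X
          = -((1 : Matrix (Fin 2) (Fin 2) ℝ) ⊗ₖ X) := by
      intro X; ext ⟨u, x⟩ ⟨v, y⟩; simp [Matrix.kroneckerMap_apply]
    rw [sub_mul, one_mul, mul_add, ← Matrix.mul_kronecker_mul,
      ← Matrix.mul_kronecker_mul, mul_one, hJ, hneg]
    have h2 : B i * (B i * C) = B i * B i * C := by rw [mul_assoc]
    rw [h2, sub_add_eq_sub_sub, add_sub_cancel_right, sub_neg_eq_add,
      ← Matrix.kronecker_add]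
    have : C + B i * B i * C = 1 := by
      rw [← one_mul C, ← mul_assoc, mul_one, ← add_mul]
      exact hC
    rw [this, Matrix.one_kronecker_one]
  -- block-diagonal forms
  have hBDof : BD = Matrix.of fun p q => if p.1 = q.1 then θ p.1 p.2 q.2 else 0 := by
    ext p q; exact hBD p q
  have hA : (1 : Matrix (Fin n × (Fin 2 × Fin (2*N+1)))
        (Fin n × (Fin 2 × Fin (2*N+1))) ℝ) - (h * ρ) • (βM ⊗ₖ (J2 ⊗ₖ (D * D)))
      = Matrix.of fun p q => if p.1 = q.1 then
          ((1 : Matrix (Fin 2 × Fin (2*N+1)) (Fin 2 × Fin (2*N+1)) ℝ)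
            - J2 ⊗ₖ B p.1) p.2 q.2 else 0 := by
    ext ⟨i, x⟩ ⟨j, y⟩
    by_cases hij : i = j
    · subst hij
      simp only [Matrix.sub_apply, Matrix.smul_apply, Matrix.kroneckerMap_apply,
        Matrix.of_apply, hβM, Matrix.diagonal_apply, if_pos rfl, hB,
        smul_eq_mul, Matrix.one_apply, Prod.mk.injEq, eq_self_iff_true, true_and, if_true]
      congr 1
      ring
    · simp [Matrix.sub_apply, Matrix.smul_apply, Matrix.kroneckerMap_apply,
        Matrix.of_apply, hβM, Matrix.diagonal_apply, hij, Matrix.one_apply,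
        Prod.mk.injEq]
  -- the inner product is 1
  have hinner : ((1 : Matrix (Fin n × (Fin 2 × Fin (2*N+1)))
        (Fin n × (Fin 2 × Fin (2*N+1))) ℝ)
        - (h * ρ) • (βM ⊗ₖ (J2 ⊗ₖ (D * D)))) * BD = 1 := by
    rw [hA, hBDof, blockMul (fun i => (1 : Matrix (Fin 2 × Fin (2*N+1)) (Fin 2 × Fin (2*N+1)) ℝ) - J2 ⊗ₖ B i) θ]
    ext ⟨i, x⟩ ⟨j, y⟩
    by_cases hij : i = j
    · subst hij
      simp [hkey i, Matrix.one_apply, Prod.ext_iff]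
    · simp [hij, Matrix.one_apply, Prod.ext_iff]
  -- lift to the Kronecker product with I_s
  have hsub : ∀ (X Y : Matrix (Fin n × (Fin 2 × Fin (2*N+1)))
      (Fin n × (Fin 2 × Fin (2*N+1))) ℝ),
      (1 : Matrix (Fin s) (Fin s) ℝ) ⊗ₖ (X - Y)
        = (1 : Matrix (Fin s) (Fin s) ℝ) ⊗ₖ X
          - (1 : Matrix (Fin s) (Fin s) ℝ) ⊗ₖ Y := by
    intro X Y; ext ⟨u, p⟩ ⟨v, q⟩; simp [Matrix.kroneckerMap_apply, mul_sub]
  have hM : (1 : Matrix (Fin s × (Fin n × (Fin 2 × Fin (2*N+1))))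
        (Fin s × (Fin n × (Fin 2 × Fin (2*N+1)))) ℝ)
      - (h * ρ) • ((1 : Matrix (Fin s) (Fin s) ℝ) ⊗ₖ (βM ⊗ₖ (J2 ⊗ₖ (D * D))))
      = (1 : Matrix (Fin s) (Fin s) ℝ) ⊗ₖ
          (1 - (h * ρ) • (βM ⊗ₖ (J2 ⊗ₖ (D * D)))) := by
    rw [hsub, Matrix.kronecker_smul, Matrix.one_kronecker_one]
  have hprod : ((1 : Matrix (Fin s × (Fin n × (Fin 2 × Fin (2*N+1))))
        (Fin s × (Fin n × (Fin 2 × Fin (2*N+1)))) ℝ)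
      - (h * ρ) • ((1 : Matrix (Fin s) (Fin s) ℝ) ⊗ₖ (βM ⊗ₖ (J2 ⊗ₖ (D * D)))))
      * ((1 : Matrix (Fin s) (Fin s) ℝ) ⊗ₖ BD) = 1 := by
    rw [hM, ← Matrix.mul_kronecker_mul, one_mul, hinner, Matrix.one_kronecker_one]
  exact ⟨(Matrix.isUnit_iff_isUnit_det _).mpr (Matrix.isUnit_det_of_right_inverse hprod), Matrix.inv_eq_right_inv hprod⟩
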